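/- arXiv:1711.10196 — 2 statements merged into one kernel-verified Lean document; each statement's English description precedes it below -/
import Mathlib

section
/- Let n, k ∈ ℕ and t ∈ {1,…,n}^k. Then: (i) #V_t ≤ 1 + κ_1(t) + κ_2(t) + ⋯ + κ_k(t) − ℓ(t); (ii) if the multigraph of t contains at least one odd edge, then #V_t ≤ κ_1(t) + κ_2(t) + ⋯ + κ_k(t). -/
open MeasureTheory ProbabilityTheory Filter Finset
open scoped BigOperators ENNReal NNReal Classical

noncomputable section

namespace RMT

variable {Ω : Type} [MeasurableSpace Ω]

/-- A triangular scheme: for each `n`, a symmetric `n × n` matrix of (measurable) real-valued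
random variables, with entries indexed by `{1, …, n}²`. -/
def IsTriangularScheme (a : ℕ → ℕ → ℕ → Ω → ℝ) : Prop :=
  ∀ n p q, p ∈ Finset.Icc 1 n → q ∈ Finset.Icc 1 n →
    a n p q = a n q p ∧ Measurable (a n p q)

/-- Condition (AAU1): distinct decay and boundedness, with constants `C k` and decay
parameter `α`.  The pairs `pq i` range over `{1,…,N}²`, are pairwise fundamentally
different (i.e. distinct as unordered pairs), and `δ i ≥ 1` are the multiplicities. -/
def AAU1 (P : Measure Ω) (a : ℕ → ℕ → ℕ → Ω → ℝ) (α : ℝ) (C : ℕ → ℝ) : Prop :=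
  ∀ (N l : ℕ) (pq : Fin l → ℕ × ℕ),
    (∀ i, (pq i).1 ∈ Finset.Icc 1 N ∧ (pq i).2 ∈ Finset.Icc 1 N) →
    (∀ i j, i ≠ j → s((pq i).1, (pq i).2) ≠ s((pq j).1, (pq j).2)) →
    ∀ n, N ≤ n → ∀ δ : Fin l → ℕ, (∀ i, 1 ≤ δ i) →
      |∫ ω, ∏ i, a n (pq i).1 (pq i).2 ω ^ δ i ∂P| ≤
        C (∑ i, δ i) / (n : ℝ) ^ (α * ((Finset.univ.filter fun i => δ i = 1).card : ℝ))

/-- Condition (AAU2): second moment condition with constants `C' l n`. -/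
def AAU2 (P : Measure Ω) (a : ℕ → ℕ → ℕ → Ω → ℝ) (C' : ℕ → ℕ → ℝ) : Prop :=
  ∀ (N l : ℕ) (pq : Fin l → ℕ × ℕ),
    (∀ i, (pq i).1 ∈ Finset.Icc 1 N ∧ (pq i).2 ∈ Finset.Icc 1 N) →
    (∀ i j, i ≠ j → s((pq i).1, (pq i).2) ≠ s((pq j).1, (pq j).2)) →
    ∀ n, N ≤ n →
      |(∫ ω, ∏ i, a n (pq i).1 (pq i).2 ω ^ 2 ∂P) - 1| ≤ C' l n

/-- Condition (AAU3): fourth moment condition with constants `D l n`. -/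
def AAU3 (P : Measure Ω) (a : ℕ → ℕ → ℕ → Ω → ℝ) (D : ℕ → ℕ → ℝ) : Prop :=
  ∀ (N l : ℕ) (hl : 0 < l) (pq : Fin l → ℕ × ℕ),
    (∀ i, (pq i).1 ∈ Finset.Icc 1 N ∧ (pq i).2 ∈ Finset.Icc 1 N) →
    (∀ i j, i ≠ j → s((pq i).1, (pq i).2) ≠ s((pq j).1, (pq j).2)) →
    ∀ n, N ≤ n →
      |∫ ω, a n (pq ⟨0, hl⟩).1 (pq ⟨0, hl⟩).2 ω ^ 4 *
          ((∏ i ∈ Finset.univ.erase ⟨0, hl⟩, a n (pq i).1 (pq i).2 ω ^ 2) - 1) ∂P| ≤ D l n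

/-- `α`-almost uncorrelated triangular scheme. -/
def AlmostUncorrelated (P : Measure Ω) (a : ℕ → ℕ → ℕ → Ω → ℝ) (α : ℝ) : Prop :=
  ∃ (C : ℕ → ℝ) (C' : ℕ → ℕ → ℝ),
    (∀ m, Tendsto (fun n => C' m n) atTop (nhds 0)) ∧ AAU1 P a α C ∧ AAU2 P a C'

/-- Strongly `α`-almost uncorrelated triangular scheme. -/
def StronglyAlmostUncorrelated (P : Measure Ω) (a : ℕ → ℕ → ℕ → Ω → ℝ) (α : ℝ) : Prop :=
  ∃ (C : ℕ → ℝ) (C' D : ℕ → ℕ → ℝ),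
    (∀ m, Tendsto (fun n => C' m n) atTop (nhds 0)) ∧
    (∀ m, Tendsto (fun n => D m n) atTop (nhds 0)) ∧
    AAU1 P a α C ∧ AAU2 P a C' ∧ AAU3 P a D

/-- Approximately uncorrelated triangular scheme (Hochstättler–Kirsch–Warzel). -/
def ApproxUncorrelated (P : Measure Ω) (a : ℕ → ℕ → ℕ → Ω → ℝ) : Prop :=
  ∃ (K : ℕ → ℕ → ℝ) (K' : ℕ → ℕ → ℝ),
    (∀ s m, 0 ≤ K s m) ∧ (∀ s n, 0 ≤ K' s n) ∧
    (∀ s, Tendsto (fun n => K' s n) atTop (nhds 0)) ∧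
    ∀ (N s m : ℕ) (pq : Fin (s + m) → ℕ × ℕ),
      (∀ i, (pq i).1 ∈ Finset.Icc 1 N ∧ (pq i).2 ∈ Finset.Icc 1 N) →
      (∀ i j : Fin (s + m), (i : ℕ) < s → i ≠ j →
        s((pq i).1, (pq i).2) ≠ s((pq j).1, (pq j).2)) →
      ∀ n, N ≤ n →
        |∫ ω, ∏ i, a n (pq i).1 (pq i).2 ω ∂P| ≤ K s m / (n : ℝ) ^ ((s : ℝ) / 2) ∧
        |(∫ ω, ∏ i ∈ Finset.univ.filter (fun i : Fin (s + m) => (i : ℕ) < s),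
            a n (pq i).1 (pq i).2 ω ^ 2 ∂P) - 1| ≤ K' s n

/-- A Wigner scheme: independent entries (up to symmetry), centered, unit variance,
with uniformly bounded moments of all orders. -/
def IsWignerScheme (P : Measure Ω) (a : ℕ → ℕ → ℕ → Ω → ℝ) : Prop :=
  IsTriangularScheme a ∧
  (∀ n : ℕ, iIndepFun (m := fun _ => (inferInstance : MeasurableSpace ℝ))
      (fun ij : {p : ℕ × ℕ // 1 ≤ p.1 ∧ p.1 ≤ p.2 ∧ p.2 ≤ n} => a n ij.1.1 ij.1.2) P) ∧
  (∀ n, ∀ p ∈ Finset.Icc 1 n, ∀ q ∈ Finset.Icc 1 n,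
      (∫ ω, a n p q ω ∂P) = 0 ∧ (∫ ω, a n p q ω ^ 2 ∂P) = 1) ∧
  (∀ k : ℕ, ∃ Cp : ℝ, ∀ n, ∀ p ∈ Finset.Icc 1 n, ∀ q ∈ Finset.Icc 1 n,
      (∫ ω, |a n p q ω| ^ k ∂P) ≤ Cp)

/-- `b` is an `n`-bandwidth: an odd number `< n`, or `n` itself. -/
def IsBandwidth (n b : ℕ) : Prop := (b < n ∧ Odd b) ∨ b = n

/-- The pair `(i,j) ∈ {1,…,n}²` is `bn`-relevant. -/
def BRelevant (n bn i j : ℕ) : Prop :=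
  bn = n ∨ |(i : ℤ) - (j : ℤ)| ≤ ((bn - 1) / 2 : ℕ) ∨
    (n : ℤ) - ((bn - 1) / 2 : ℕ) ≤ |(i : ℤ) - (j : ℤ)|

/-- The periodic random band matrix of dimension `n × n` based on the scheme `a` with
bandwidths `b` : entries `X_n(p,q) = b_n^{-1/2} a_n(p,q)` for `b_n`-relevant `(p,q)`, else `0`. -/
def bandMatrix (a : ℕ → ℕ → ℕ → Ω → ℝ) (b : ℕ → ℕ) (n : ℕ) (ω : Ω) :
    Matrix (Fin n) (Fin n) ℝ := fun i j =>
  if BRelevant n (b n) (i.1 + 1) (j.1 + 1)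
  then (Real.sqrt (b n))⁻¹ * a n (i.1 + 1) (j.1 + 1) ω else 0

/-- The empirical spectral distribution of a real symmetric matrix
(junk value `0` if the matrix is not symmetric). -/
def ESD {n : ℕ} (M : Matrix (Fin n) (Fin n) ℝ) : Measure ℝ :=
  if h : M.IsHermitian then
    ((n : ℝ≥0∞))⁻¹ • ∑ i : Fin n, Measure.dirac (h.eigenvalues i)
  else 0

/-- The semicircle distribution, with Lebesgue density
`(2π)⁻¹ √(4 - x²) 1_{[-2,2]}(x)`. -/
def semicircle : Measure ℝ :=
  volume.withDensity fun x =>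
    ENNReal.ofReal (if -2 ≤ x ∧ x ≤ 2 then (2 * Real.pi)⁻¹ * Real.sqrt (4 - x ^ 2) else 0)

/-- The semicircle law holds in probability for the random matrices `X n`. -/
def SemicircleLawInProbability (P : Measure Ω)
    (X : (n : ℕ) → Ω → Matrix (Fin n) (Fin n) ℝ) : Prop :=
  ∀ f : BoundedContinuousFunction ℝ ℝ,
    TendstoInMeasure P (fun n ω => ∫ x, f x ∂ ESD (X n ω)) atTop
      (fun _ => ∫ x, f x ∂ semicircle)

/-- The semicircle law holds almost surely for the random matrices `X n`. -/
def SemicircleLawAS (P : Measure Ω)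
    (X : (n : ℕ) → Ω → Matrix (Fin n) (Fin n) ℝ) : Prop :=
  ∀ f : BoundedContinuousFunction ℝ ℝ,
    ∀ᵐ ω ∂P, Tendsto (fun n => ∫ x, f x ∂ ESD (X n ω)) atTop
      (nhds (∫ x, f x ∂ semicircle))

/-- The family `Y` is Curie-Weiss(`β`, `card ι`)-distributed. -/
def IsCurieWeiss {ι : Type} [Fintype ι] (P : Measure Ω) (β : ℝ) (Y : ι → Ω → ℝ) : Prop :=
  (∀ i, Measurable (Y i)) ∧
  (∀ᵐ ω ∂P, ∀ i, Y i ω = 1 ∨ Y i ω = -1) ∧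
  ∃ Z : ℝ, 0 < Z ∧ ∀ y : ι → ℝ, (∀ i, y i = 1 ∨ y i = -1) →
    P {ω | ∀ i, Y i ω = y i} =
      ENNReal.ofReal (Z⁻¹ * Real.exp (β / (2 * Fintype.card ι) * (∑ i, y i) ^ 2))

/-- `Δ n = n (n+1) / 2`. -/
def Δn (n : ℕ) : ℕ := n * (n + 1) / 2

/-- Pair partitions of `{1, …, k}`, encoded as fixed-point-free involutions of `Fin k`. -/
def PairPartitions (k : ℕ) : Finset (Equiv.Perm (Fin k)) :=
  Finset.univ.filter fun π => ∀ r, π (π r) = r ∧ π r ≠ r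

/-- The product `∏_{{r,s} ∈ π} S (i r) (i s)` over the blocks of a pair partition `π`. -/
def pairProd {k m : ℕ} (S : Matrix (Fin m) (Fin m) ℝ) (i : Fin k → Fin m)
    (π : Equiv.Perm (Fin k)) : ℝ :=
  ∏ r ∈ Finset.univ.filter (fun r => r < π r), S (i r) (i (π r))

/-- `(Σ_n)_n ∈ CovMat(α)`: symmetric positive definite, unit diagonal, off-diagonal
entries bounded by `n^{-α}`. -/
def CovMatSeq (α : ℝ) (S : ∀ n : ℕ, Matrix (Fin n) (Fin n) ℝ) : Prop :=
  ∀ n, (S n).IsSymm ∧ (S n).PosDef ∧ (∀ i, S n i i = 1) ∧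
    ∀ i j : Fin n, i ≠ j → |S n i j| ≤ 1 / (n : ℝ) ^ α

/-- Position `r` (0-based) lies in the `j`-th block of sizes `δ 0, δ 1, …`. -/
def inBlock {l : ℕ} (δ : Fin l → ℕ) (j : Fin l) (r : ℕ) : Prop :=
  (∑ j' ∈ Finset.univ.filter (· < j), δ j') ≤ r ∧
    r < ∑ j' ∈ Finset.univ.filter (· ≤ j), δ j'

/-- The family `Y` is a centered Gaussian family with covariance matrix `S`:
every linear combination is a centered real Gaussian with the corresponding variance. -/
def IsCenteredGaussianFamily (P : Measure Ω) {m : ℕ}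
    (Y : Fin m → Ω → ℝ) (S : Matrix (Fin m) (Fin m) ℝ) : Prop :=
  (∀ i, Measurable (Y i)) ∧
  ∀ c : Fin m → ℝ,
    Measure.map (fun ω => ∑ i, c i * Y i ω) P =
      gaussianReal 0 (Real.toNNReal (∑ i, ∑ j, c i * S i j * c j))

/-- The Gaussian triangular scheme `a` constructed from a covariance sequence `S`
via a filling bijection `φ` (with values in `{1,…,Δ_n}`) and Gaussian vectors `Y`. -/
def GaussianScheme (P : Measure Ω) (S : ∀ m, Matrix (Fin m) (Fin m) ℝ)
    (φ : ℕ → ℕ → ℕ → ℕ) (Y : ℕ → ℕ → Ω → ℝ) (a : ℕ → ℕ → ℕ → Ω → ℝ) : Prop :=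
  (∀ n, Set.BijOn (fun p : ℕ × ℕ => φ n p.1 p.2)
      {p : ℕ × ℕ | 1 ≤ p.1 ∧ p.1 ≤ p.2 ∧ p.2 ≤ n} (Set.Icc 1 (Δn n))) ∧
  (∀ n i j, j < i → φ n i j = φ n j i) ∧
  (∀ n, IsCenteredGaussianFamily P (fun t : Fin (Δn n) => Y n (t.1 + 1)) (S (Δn n))) ∧
  (∀ n i j, a n i j = Y n (φ n i j))

/-- Cyclic successor on `Fin k`. -/
def cyc {k : ℕ} (i : Fin k) : Fin k :=
  ⟨(i.1 + 1) % k, Nat.mod_lt _ (Nat.lt_of_le_of_lt (Nat.zero_le _) i.isLt)⟩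

/-- The multiset of edges of the cyclic multigraph of the tuple `t`. -/
def tupleEdges {k : ℕ} (t : Fin k → ℕ) : Multiset (Sym2 ℕ) :=
  Finset.univ.val.map fun i : Fin k => s(t i, t (cyc i))

/-- `kappa t l` = number of distinct `l`-fold edges of `t`. -/
def kappa {k : ℕ} (t : Fin k → ℕ) (l : ℕ) : ℕ :=
  ((tupleEdges t).toFinset.filter fun e => (tupleEdges t).count e = l).card

/-- Number of distinct loops of `t`. -/
def numLoops {k : ℕ} (t : Fin k → ℕ) : ℕ :=
  ((tupleEdges t).toFinset.filter fun e => e.IsDiag).card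

/-- `t` has at least one odd edge. -/
def hasOddEdge {k : ℕ} (t : Fin k → ℕ) : Prop :=
  ∃ e ∈ (tupleEdges t).toFinset, Odd ((tupleEdges t).count e)

/-- `t` has only even edges. -/
def hasOnlyEvenEdges {k : ℕ} (t : Fin k → ℕ) : Prop :=
  ∀ e ∈ (tupleEdges t).toFinset, Even ((tupleEdges t).count e)

/-- Vertex set of the tuple `t`. -/
def verts {k : ℕ} (t : Fin k → ℕ) : Finset ℕ := Finset.image t Finset.univ

/-- The set of `bn`-relevant `k`-tuples with entries in `{1,…,n}`. -/
def relTuples (n bn k : ℕ) : Finset (Fin k → ℕ) :=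
  (Fintype.piFinset fun _ : Fin k => Finset.Icc 1 n).filter
    fun t => ∀ i : Fin k, BRelevant n bn (t i) (t (cyc i))

/-- `t` and `s` have the same profile `κ`. -/
def sameProfile {k : ℕ} (t s : Fin k → ℕ) : Prop :=
  ∀ l ∈ Finset.Icc 1 k, kappa t l = kappa s l

/-- Equivalence class `𝒯(s)` of `s` in `[n]^k_b`. -/
def Tclass (n bn k : ℕ) (s : Fin k → ℕ) : Finset (Fin k → ℕ) :=
  (relTuples n bn k).filter fun t => sameProfile t s

/-- `𝒯^c(s,s')`: pairs of tuples with prescribed profiles having a common edge. -/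
def Tcommon (n bn k : ℕ) (s s' : Fin k → ℕ) : Finset ((Fin k → ℕ) × (Fin k → ℕ)) :=
  ((relTuples n bn k) ×ˢ (relTuples n bn k)).filter fun tt =>
    sameProfile tt.1 s ∧ sameProfile tt.2 s' ∧
      ((tupleEdges tt.1).toFinset ∩ (tupleEdges tt.2).toFinset).Nonempty

/-- `𝒯^c_l(s,s')`: pairs in `𝒯^c(s,s')` with exactly `l` common edges. -/
def TcommonL (n bn k : ℕ) (s s' : Fin k → ℕ) (l : ℕ) :
    Finset ((Fin k → ℕ) × (Fin k → ℕ)) :=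
  (Tcommon n bn k s s').filter fun tt =>
    ((tupleEdges tt.1).toFinset ∩ (tupleEdges tt.2).toFinset).card = l

section Stmt14Aux

open Finset

variable {k : ℕ} (t : Fin k → ℕ)

private lemma RMT_card_tupleEdges : Multiset.card (tupleEdges t) = k := by
  simp [tupleEdges]

private lemma RMT_edge_mem (i : Fin k) :
    s(t i, t (cyc i)) ∈ (tupleEdges t).toFinset := by
  simp only [Multiset.mem_toFinset, tupleEdges, Multiset.mem_map]
  exact ⟨i, by simp, rfl⟩

private lemma RMT_card_toFinset_eq_sum :
    (tupleEdges t).toFinset.card = ∑ l ∈ Icc 1 k, kappa t l := by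
  rw [Finset.card_eq_sum_card_fiberwise
    (f := fun e => (tupleEdges t).count e) (t := Icc 1 k)]
  · rfl
  · intro e he
    rw [Finset.mem_coe, mem_Icc]
    refine ⟨?_, ?_⟩
    · exact Multiset.one_le_count_iff_mem.2 (Multiset.mem_toFinset.1 he)
    · calc (tupleEdges t).count e ≤ Multiset.card (tupleEdges t) :=
            Multiset.count_le_card _ _
        _ = k := RMT_card_tupleEdges t

private lemma RMT_count_eq_card (e : Sym2 ℕ) :
    (tupleEdges t).count e
      = (univ.filter fun i : Fin k => e = s(t i, t (cyc i))).card := by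
  rw [tupleEdges, Multiset.count_map]
  rfl

/-- first index at which a value appears in the tuple -/
private noncomputable def fD : ℕ → ℕ := fun v =>
  if h : ∃ m : ℕ, ∃ hm : m < k, t ⟨m, hm⟩ = v then Nat.find h else 0

private lemma RMT_exists_of_mem {v : ℕ} (h : ∃ i : Fin k, t i = v) :
    ∃ m : ℕ, ∃ hm : m < k, t ⟨m, hm⟩ = v := by
  obtain ⟨i, hi⟩ := h
  exact ⟨i.1, i.2, by simpa using hi⟩

private lemma RMT_fD_lt {v : ℕ} (h : ∃ i : Fin k, t i = v) : fD t v < k := by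
  have h' := RMT_exists_of_mem t h
  rw [fD, dif_pos h']
  exact (Nat.find_spec h').choose

private lemma RMT_fD_eq {v : ℕ} (h : ∃ i : Fin k, t i = v) :
    t ⟨fD t v, RMT_fD_lt t h⟩ = v := by
  have h' := RMT_exists_of_mem t h
  have : fD t v = Nat.find h' := by rw [fD, dif_pos h']
  have hs := (Nat.find_spec h').choose_spec
  simp only [this]
  convert hs using 2

private lemma RMT_fD_min {v : ℕ} {i : Fin k} (hi : t i = v) : fD t v ≤ i.1 := by
  have h' : ∃ m : ℕ, ∃ hm : m < k, t ⟨m, hm⟩ = v := ⟨i.1, i.2, by simpa using hi⟩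
  rw [fD, dif_pos h']
  exact Nat.find_le ⟨i.2, by simpa using hi⟩

variable (hk : 0 < k)

private lemma RMT_fD_root : fD t (t ⟨0, hk⟩) = 0 :=
  Nat.le_zero.1 (RMT_fD_min t (i := ⟨0, hk⟩) rfl)

private lemma RMT_eq_root_of_fD_eq_zero {v : ℕ} (h : ∃ i : Fin k, t i = v)
    (h0 : fD t v = 0) : v = t ⟨0, hk⟩ := by
  have := RMT_fD_eq t h
  rw [← this]
  congr 1
  exact Fin.ext h0

private lemma RMT_fD_pos {v : ℕ} (h : ∃ i : Fin k, t i = v)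
    (hr : v ≠ t ⟨0, hk⟩) : 1 ≤ fD t v := by
  rcases Nat.eq_zero_or_pos (fD t v) with h0 | h1
  · exact absurd (RMT_eq_root_of_fD_eq_zero t hk h h0) hr
  · exact h1

/-- parent map along first appearances -/
private noncomputable def fP : ℕ → ℕ := fun v =>
  if h : (∃ i : Fin k, t i = v) ∧ v ≠ t ⟨0, hk⟩ then
    t ⟨fD t v - 1, lt_of_le_of_lt (Nat.sub_le _ _) (RMT_fD_lt t h.1)⟩
  else v

private lemma RMT_fP_eq {v : ℕ} (h : ∃ i : Fin k, t i = v) (hr : v ≠ t ⟨0, hk⟩) :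
    fP t hk v = t ⟨fD t v - 1, lt_of_le_of_lt (Nat.sub_le _ _) (RMT_fD_lt t h)⟩ := by
  rw [fP, dif_pos ⟨h, hr⟩]

private lemma RMT_fP_edge {v : ℕ} (h : ∃ i : Fin k, t i = v) (hr : v ≠ t ⟨0, hk⟩) :
    ∃ i : Fin k, t i = fP t hk v ∧ t (cyc i) = v := by
  refine ⟨⟨fD t v - 1, lt_of_le_of_lt (Nat.sub_le _ _) (RMT_fD_lt t h)⟩,
    (RMT_fP_eq t hk h hr).symm, ?_⟩
  have h1 : 1 ≤ fD t v := RMT_fD_pos t hk h hr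
  have hcyc : cyc (⟨fD t v - 1, lt_of_le_of_lt (Nat.sub_le _ _) (RMT_fD_lt t h)⟩ : Fin k)
      = ⟨fD t v, RMT_fD_lt t h⟩ := by
    apply Fin.ext
    show (fD t v - 1 + 1) % k = fD t v
    rw [Nat.sub_add_cancel h1, Nat.mod_eq_of_lt (RMT_fD_lt t h)]
  rw [hcyc]
  exact RMT_fD_eq t h

private lemma RMT_fD_fP_lt {v : ℕ} (h : ∃ i : Fin k, t i = v) (hr : v ≠ t ⟨0, hk⟩) :
    fD t (fP t hk v) < fD t v := by
  have h1 : 1 ≤ fD t v := RMT_fD_pos t hk h hr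
  have := RMT_fD_min t (RMT_fP_eq t hk h hr).symm
  simp only at this
  omega

private lemma RMT_fP_ne {v : ℕ} (h : ∃ i : Fin k, t i = v) (hr : v ≠ t ⟨0, hk⟩) :
    fP t hk v ≠ v := by
  intro hvv
  have := RMT_fD_fP_lt t hk h hr
  rw [hvv] at this
  exact lt_irrefl _ this

private lemma RMT_fD_fP_le (v : ℕ) : fD t (fP t hk v) ≤ fD t v := by
  by_cases h : (∃ i : Fin k, t i = v) ∧ v ≠ t ⟨0, hk⟩
  · exact (RMT_fD_fP_lt t hk h.1 h.2).le
  · rw [fP, dif_neg h]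

private lemma RMT_fD_iter_le (m : ℕ) (v : ℕ) : fD t ((fP t hk)^[m] v) ≤ fD t v := by
  induction m generalizing v with
  | zero => simp
  | succ m ih =>
      rw [Function.iterate_succ_apply]
      exact le_trans (ih (fP t hk v)) (RMT_fD_fP_le t hk v)

private lemma RMT_mem_verts_iff {v : ℕ} : v ∈ verts t ↔ ∃ i : Fin k, t i = v := by
  simp [verts]

private lemma RMT_injOn :
    Set.InjOn (fun v => s(fP t hk v, v)) ((verts t).erase (t ⟨0, hk⟩)) := by
  intro v hv w hw hvw
  simp only [Finset.coe_erase, Set.mem_diff, Finset.mem_coe, Set.mem_singleton_iff] at hv hw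
  have hv' : ∃ i : Fin k, t i = v := (RMT_mem_verts_iff t).1 hv.1
  have hw' : ∃ i : Fin k, t i = w := (RMT_mem_verts_iff t).1 hw.1
  simp only [Sym2.eq_iff] at hvw
  rcases hvw with ⟨_, h2⟩ | ⟨h1, h2⟩
  · exact h2
  · exfalso
    have hlt1 : fD t w < fD t v := by
      have := RMT_fD_fP_lt t hk hv' hv.2
      rwa [h1] at this
    have hlt2 : fD t v < fD t w := by
      have := RMT_fD_fP_lt t hk hw' hw.2
      rwa [← h2] at this
    omega

private lemma RMT_maps {v : ℕ} (hv : v ∈ (verts t).erase (t ⟨0, hk⟩)) :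
    s(fP t hk v, v) ∈ (tupleEdges t).toFinset.filter fun e : Sym2 ℕ => ¬ e.IsDiag := by
  rw [Finset.mem_erase] at hv
  have hv' : ∃ i : Fin k, t i = v := (RMT_mem_verts_iff t).1 hv.2
  obtain ⟨i, hi1, hi2⟩ := RMT_fP_edge t hk hv' hv.1
  rw [Finset.mem_filter]
  constructor
  · rw [← hi1, ← hi2]; exact RMT_edge_mem t i
  · rw [Sym2.mk_isDiag_iff]
    exact RMT_fP_ne t hk hv' hv.1

private lemma RMT_cyc_eq [NeZero k] (i : Fin k) : cyc i = i + 1 := by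
  apply Fin.ext
  show (i.1 + 1) % k = (i + 1 : Fin k).1
  rw [Fin.val_add, Fin.val_one', Nat.add_mod_mod]

private lemma RMT_cut_parity (hk0 : 0 < k) (A : ℕ → Prop) :
    Even (univ.filter fun i : Fin k => ¬ (A (t i) ↔ A (t (cyc i)))).card := by
  haveI : NeZero k := ⟨hk0.ne'⟩
  have hbij : Function.Bijective (cyc : Fin k → Fin k) := by
    rw [show (cyc : Fin k → Fin k) = (· + 1) from funext (RMT_cyc_eq)]
    exact (Equiv.addRight (1 : Fin k)).bijective
  have h0 : (∑ i : Fin k, ((if A (t (cyc i)) then (1 : ZMod 2) else 0)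
      - (if A (t i) then 1 else 0))) = 0 := by
    rw [Finset.sum_sub_distrib,
      hbij.sum_comp (fun j => if A (t j) then (1 : ZMod 2) else 0), sub_self]
  have h1 : ∀ i : Fin k, ((if A (t (cyc i)) then (1 : ZMod 2) else 0)
      - (if A (t i) then 1 else 0))
      = if ¬ (A (t i) ↔ A (t (cyc i))) then 1 else 0 := by
    intro i
    by_cases h1 : A (t i) <;> by_cases h2 : A (t (cyc i)) <;>
      simp [h1, h2] <;> decide
  rw [Finset.sum_congr rfl (fun i _ => h1 i), Finset.sum_boole] at h0
  exact (even_iff_two_dvd).2 ((ZMod.natCast_eq_zero_iff _ 2).1 h0)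

end Stmt14Aux


/-- Vertex bounds for the cyclic multigraph of a tuple. -/
theorem stmt14 (n k : ℕ) (hk : 0 < k) (t : Fin k → ℕ)
    (ht : ∀ i, t i ∈ Finset.Icc 1 n) :
    ((verts t).card : ℤ) ≤
        1 + (∑ l ∈ Finset.Icc 1 k, (kappa t l : ℤ)) - (numLoops t : ℤ) ∧
    (hasOddEdge t → (verts t).card ≤ ∑ l ∈ Finset.Icc 1 k, kappa t l) := by
  classical
  have hroot : t ⟨0, hk⟩ ∈ verts t := Finset.mem_image_of_mem t (Finset.mem_univ _)
  have hEsum : (tupleEdges t).toFinset.card = ∑ l ∈ Finset.Icc 1 k, kappa t l :=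
    RMT_card_toFinset_eq_sum t
  have hnl : numLoops t = ((tupleEdges t).toFinset.filter fun e : Sym2 ℕ => e.IsDiag).card := rfl
  have hsplit : (((tupleEdges t).toFinset.filter fun e : Sym2 ℕ => e.IsDiag).card
      + ((tupleEdges t).toFinset.filter fun e : Sym2 ℕ => ¬ e.IsDiag).card)
      = (tupleEdges t).toFinset.card :=
    Finset.card_filter_add_card_filter_not (p := fun e : Sym2 ℕ => e.IsDiag)
  have hinj : ((verts t).erase (t ⟨0, hk⟩)).card
      ≤ ((tupleEdges t).toFinset.filter fun e : Sym2 ℕ => ¬ e.IsDiag).card :=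
    Finset.card_le_card_of_injOn _ (fun v hv => RMT_maps t hk hv) (RMT_injOn t hk)
  have herase : ((verts t).erase (t ⟨0, hk⟩)).card = (verts t).card - 1 :=
    Finset.card_erase_of_mem hroot
  have hvpos : 1 ≤ (verts t).card := Finset.card_pos.2 ⟨_, hroot⟩
  constructor
  · have hcast : (∑ l ∈ Finset.Icc 1 k, (kappa t l : ℤ))
        = ((∑ l ∈ Finset.Icc 1 k, kappa t l : ℕ) : ℤ) := by push_cast; rfl
    rw [hcast]
    omega
  · intro hodd
    rw [← hEsum]
    by_cases hl : numLoops t = 0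
    swap
    · omega
    by_cases hle : (verts t).card ≤ (tupleEdges t).toFinset.card
    · exact hle
    exfalso
    have himcard : (Finset.image (fun v => s(fP t hk v, v)) ((verts t).erase (t ⟨0, hk⟩))).card
        = ((verts t).erase (t ⟨0, hk⟩)).card := Finset.card_image_of_injOn (RMT_injOn t hk)
    have himsub : (Finset.image (fun v => s(fP t hk v, v)) ((verts t).erase (t ⟨0, hk⟩)))
        ⊆ (tupleEdges t).toFinset := by
      intro e he
      obtain ⟨v, hv, rfl⟩ := Finset.mem_image.1 he
      exact (Finset.mem_filter.1 (RMT_maps t hk hv)).1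
    have himeq : (Finset.image (fun v => s(fP t hk v, v)) ((verts t).erase (t ⟨0, hk⟩)))
        = (tupleEdges t).toFinset := by
      apply Finset.eq_of_subset_of_card_le himsub
      rw [himcard, herase]
      omega
    obtain ⟨e₀, he₀, hodd₀⟩ := hodd
    rw [← himeq] at he₀
    obtain ⟨w, hw, hfw⟩ := Finset.mem_image.1 he₀
    have hw' := Finset.mem_erase.1 hw
    have hwv : ∃ i : Fin k, t i = w := (RMT_mem_verts_iff t).1 hw'.2
    set A : ℕ → Prop := fun v => ∃ m, (fP t hk)^[m] v = w with hA
    have hwA : A w := ⟨0, rfl⟩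
    have hPwA : ¬ A (fP t hk w) := by
      rintro ⟨m, hm⟩
      have h1 : fD t ((fP t hk)^[m] (fP t hk w)) ≤ fD t (fP t hk w) :=
        RMT_fD_iter_le t hk m _
      rw [hm] at h1
      exact absurd (lt_of_le_of_lt h1 (RMT_fD_fP_lt t hk hwv hw'.1)) (lt_irrefl _)
    have hAiff : ∀ v, v ≠ w → (A v ↔ A (fP t hk v)) := by
      intro v hvw
      constructor
      · rintro ⟨m, hm⟩
        cases m with
        | zero => exact absurd hm hvw
        | succ m => exact ⟨m, by rwa [Function.iterate_succ_apply] at hm⟩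
      · rintro ⟨m, hm⟩
        exact ⟨m + 1, by rwa [Function.iterate_succ_apply]⟩
    have hcount : (tupleEdges t).count e₀
        = (Finset.univ.filter fun i : Fin k => ¬ (A (t i) ↔ A (t (cyc i)))).card := by
      rw [RMT_count_eq_card]
      congr 1
      apply Finset.filter_congr
      intro i _
      constructor
      · intro hei
        rw [← hfw] at hei
        rw [Sym2.eq_iff] at hei
        rcases hei with ⟨h1, h2⟩ | ⟨h1, h2⟩
        · rw [← h1, ← h2]
          exact fun hc => hPwA (hc.2 hwA)
        · rw [← h1, ← h2]
          exact fun hc => hPwA (hc.1 hwA)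
      · intro hni
        have hmem : s(t i, t (cyc i)) ∈ (tupleEdges t).toFinset := RMT_edge_mem t i
        rw [← himeq] at hmem
        obtain ⟨v, hv, hfv⟩ := Finset.mem_image.1 hmem
        have hv' := Finset.mem_erase.1 hv
        by_cases hvw : v = w
        · subst hvw
          rw [← hfw]
          exact hfv
        · exfalso
          have hiff := hAiff v hvw
          rw [Sym2.eq_iff] at hfv
          rcases hfv with ⟨h1, h2⟩ | ⟨h1, h2⟩
          · rw [← h1, ← h2] at hni
            exact hni hiff.symm
          · rw [← h1, ← h2] at hni
            exact hni hiff
    have heven := RMT_cut_parity t hk A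
    rw [← hcount] at heven
    exact (Nat.not_even_iff_odd.2 hodd₀) heven

end RMT
end
end

section
/- Let b = (b_n)_n be a sequence of n-bandwidths and fix n, k ∈ ℕ. Then: (i) there are at most (k+1)^k equivalence classes in [n]^k_b under the relation of equal profile; (ii) for any s ∈ [n]^k_b: (a) #𝒯(s) ≤ k^k · n · b_n^{κ_1(s)+⋯+κ_k(s)}; (b) if the multigraph of s contains at least one odd edge, then #𝒯(s) ≤ k^k · n · b_n^{κ_1(s)+⋯+κ_k(s)−1}. -/
open MeasureTheory ProbabilityTheory Filter Finset
open scoped BigOperators ENNReal NNReal Classical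

noncomputable section

namespace RMT

variable {Ω : Type} [MeasurableSpace Ω]

variable {k n bn : ℕ}

/-- number of distinct edges -/
lemma kappa_le (t : Fin k → ℕ) (l : ℕ) : kappa t l ≤ k := by
  have h1 : ((tupleEdges t).toFinset.filter fun e => (tupleEdges t).count e = l).card
      ≤ (tupleEdges t).toFinset.card := Finset.card_filter_le _ _
  have h2 : (tupleEdges t).toFinset.card ≤ Multiset.card (tupleEdges t) :=
    Multiset.toFinset_card_le _
  have h3 : Multiset.card (tupleEdges t) = k := by
    simp [tupleEdges]
  calc kappa t l ≤ _ := h1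
    _ ≤ _ := h2
    _ = k := h3

lemma part_i : ((relTuples n bn k).image (fun t => fun j : Fin k => kappa t (j.1 + 1))).card ≤
    (k + 1) ^ k := by
  have hsub : ((relTuples n bn k).image (fun t => fun j : Fin k => kappa t (j.1 + 1))) ⊆
      Fintype.piFinset fun _ : Fin k => Finset.range (k+1) := by
    intro f hf
    simp only [Finset.mem_image] at hf
    obtain ⟨t, _, rfl⟩ := hf
    simp only [Fintype.mem_piFinset, Finset.mem_range]
    intro j
    exact Nat.lt_succ_of_le (kappa_le t _)
  calc _ ≤ (Fintype.piFinset fun _ : Fin k => Finset.range (k+1)).card :=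
        Finset.card_le_card hsub
    _ = (k+1)^k := by simp [Fintype.card_piFinset]
/-- First index at which the value `t i` occurs. -/
def fI (t : Fin k → ℕ) (i : Fin k) : Fin k :=
  (Finset.univ.filter fun j => t j = t i).min' ⟨i, by simp⟩

lemma fI_le (t : Fin k → ℕ) (i : Fin k) : fI t i ≤ i :=
  Finset.min'_le _ _ (by simp)

lemma t_fI (t : Fin k → ℕ) (i : Fin k) : t (fI t i) = t i := by
  have := Finset.min'_mem (Finset.univ.filter fun j => t j = t i) ⟨i, by simp⟩
  simpa [fI] using this

lemma fI_le_of_eq (t : Fin k → ℕ) {i j : Fin k} (h : t j = t i) : fI t i ≤ j :=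
  Finset.min'_le _ _ (by simp [h])

lemma fI_congr (t : Fin k → ℕ) {i j : Fin k} (h : t i = t j) : fI t i = fI t j := by
  unfold fI
  congr 1
  ext x
  simp [h]

/-- Step `i` goes to an already-visited vertex. -/
def isOld (t : Fin k → ℕ) (i : Fin k) : Prop := fI t (cyc i) ≤ i

lemma cyc_val_of_not_old {t : Fin k → ℕ} {i : Fin k} (h : ¬ isOld t i) :
    (cyc i).1 = i.1 + 1 := by
  have h1 : ¬ (cyc i ≤ i) := fun hle => h (le_trans (fI_le t (cyc i)) hle)
  have h2 : (cyc i).1 = (i.1 + 1) % k := rfl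
  have h3 : i.1 < k := i.isLt
  have h4 : (i.1+1) % k ≤ i.1 + 1 := Nat.mod_le _ _
  rcases Nat.lt_or_ge (i.1+1) k with hlt | hge
  · simp [h2, Nat.mod_eq_of_lt hlt]
  · exfalso
    have : i.1 + 1 = k := by omega
    apply h1
    show (cyc i).1 ≤ i.1
    omega
lemma fI_cyc_of_not_old {t : Fin k → ℕ} {i : Fin k} (h : ¬ isOld t i) :
    fI t (cyc i) = cyc i := by
  have h1 := fI_le t (cyc i)
  have h2 : ¬ (fI t (cyc i) ≤ i) := h
  have h3 := cyc_val_of_not_old h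
  have : (fI t (cyc i)).1 = (cyc i).1 := by
    have := Fin.le_def.mp h1
    have h4 : ¬ ((fI t (cyc i)).1 ≤ i.1) := fun hh => h2 (Fin.le_def.mpr hh)
    omega
  exact Fin.ext this

lemma not_old_no_earlier {t : Fin k → ℕ} {i : Fin k} (h : ¬ isOld t i)
    {j : Fin k} (hj : j ≤ i) : t j ≠ t (cyc i) := fun he =>
  h (le_trans (fI_le_of_eq t he) hj)

/-- The σ-encoding of a step. -/
def sig (t : Fin k → ℕ) (i : Fin k) : ℕ :=
  if isOld t i then (fI t (cyc i)).1 else i.1 + 1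

/-- candidate next vertices -/
def Rel (n bn v : ℕ) : Finset ℕ := (Finset.Icc 1 n).filter fun j => BRelevant n bn v j

/-- The d-encoding of a step. -/
def den (n bn : ℕ) (t : Fin k → ℕ) (i : Fin k) : ℕ :=
  if isOld t i then 0 else ((Rel n bn (t i)).filter (· < t (cyc i))).card

lemma sig_lt (t : Fin k → ℕ) (i : Fin k) : sig t i < k := by
  unfold sig
  split
  · exact (fI t (cyc i)).isLt
  · next h => have := cyc_val_of_not_old h; have := (cyc i).isLt; omega

lemma sig_eq_iff_not_old (t : Fin k → ℕ) (i : Fin k) :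
    sig t i = i.1 + 1 ↔ ¬ isOld t i := by
  constructor
  · intro h hold
    have h2 : sig t i = (fI t (cyc i)).1 := if_pos hold
    have := Fin.le_def.mp (hold : fI t (cyc i) ≤ i)
    omega
  · intro h; exact if_neg h
lemma mem_relTuples {t : Fin k → ℕ} (ht : t ∈ relTuples n bn k) :
    (∀ i, t i ∈ Finset.Icc 1 n) ∧ ∀ i, t (cyc i) ∈ Rel n bn (t i) := by
  simp only [relTuples, Finset.mem_filter, Fintype.mem_piFinset] at ht
  refine ⟨ht.1, fun i => ?_⟩
  simp only [Rel, Finset.mem_filter]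
  exact ⟨ht.1 _, ht.2 i⟩

lemma rank_lt_card {S : Finset ℕ} {x : ℕ} (hx : x ∈ S) :
    (S.filter (fun z => z < x)).card < S.card := by
  apply Finset.card_lt_card
  constructor
  · exact Finset.filter_subset _ _
  · intro hsub
    have := hsub hx
    simp at this

lemma rank_injOn {S : Finset ℕ} {x y : ℕ} (hx : x ∈ S) (hy : y ∈ S)
    (h : (S.filter (fun z => z < x)).card = (S.filter (fun z => z < y)).card) : x = y := by
  have key : ∀ a b : ℕ, a ∈ S → a < b → (S.filter (fun z => z < a)).card < (S.filter (fun z => z < b)).card := by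
    intro a b ha hab
    apply Finset.card_lt_card
    constructor
    · intro z hz
      simp only [Finset.mem_filter] at hz ⊢
      exact ⟨hz.1, lt_trans hz.2 hab⟩
    · intro hsub
      have := hsub (Finset.mem_filter.mpr ⟨ha, hab⟩)
      simp at this
  rcases lt_trichotomy x y with hlt | he | hgt
  · exact absurd h (Nat.ne_of_lt (key x y hx hlt))
  · exact he
  · exact absurd h.symm (Nat.ne_of_lt (key y x hy hgt))

/-- Key injectivity of the encoding. -/
lemma enc_inj (hk : 0 < k) {t t' : Fin k → ℕ}
    (ht : t ∈ relTuples n bn k) (ht' : t' ∈ relTuples n bn k)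
    (h0 : t ⟨0, hk⟩ = t' ⟨0, hk⟩) (hs : sig t = sig t') (hd : den n bn t = den n bn t') :
    t = t' := by
  have H : ∀ m : ℕ, ∀ i : Fin k, i.1 ≤ m → t i = t' i := by
    intro m
    induction m with
    | zero =>
      intro i hi
      have hi0 : i.1 = 0 := Nat.le_zero.mp hi
      have : i = ⟨0, hk⟩ := Fin.ext (by simp [hi0])
      rw [this]; exact h0
    | succ m ih =>
      intro i hi
      rcases Nat.lt_or_ge i.1 (m+1) with hlt | hge
      · exact ih i (by omega)
      have him : i.1 = m + 1 := by omega
      have hmk : m < k := by have := i.isLt; omega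
      set i₀ : Fin k := ⟨m, hmk⟩ with hi₀
      have hcyc : cyc i₀ = i := by
        apply Fin.ext
        show (m + 1) % k = i.1
        rw [Nat.mod_eq_of_lt (by omega)]
        omega
      have hsig := congrFun hs i₀
      by_cases hold : isOld t i₀
      · have hold' : isOld t' i₀ := by
          by_contra hold'
          rw [sig, if_pos hold, sig, if_neg hold'] at hsig
          have := Fin.le_def.mp (hold : fI t (cyc i₀) ≤ i₀)
          omega
        rw [sig, if_pos hold, sig, if_pos hold'] at hsig
        have hle : (fI t (cyc i₀)).1 ≤ m := Fin.le_def.mp hold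
        have e1 : t (fI t (cyc i₀)) = t i := by rw [t_fI t (cyc i₀), hcyc]
        have e2 : t' (fI t' (cyc i₀)) = t' i := by rw [t_fI t' (cyc i₀), hcyc]
        rw [← e1, ← e2]
        have : fI t (cyc i₀) = fI t' (cyc i₀) := Fin.ext hsig
        rw [← this]
        exact ih _ hle
      · have hold' : ¬ isOld t' i₀ := by
          by_contra hold'
          try rw [not_not] at hold'
          rw [sig, if_neg hold, sig, if_pos hold'] at hsig
          have := Fin.le_def.mp (hold' : fI t' (cyc i₀) ≤ i₀)
          omega
        have hden := congrFun hd i₀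
        rw [den, if_neg hold, den, if_neg hold'] at hden
        have hti₀ : t i₀ = t' i₀ := ih i₀ (le_refl m)
        rw [← hti₀] at hden
        have hm1 : t (cyc i₀) ∈ Rel n bn (t i₀) := (mem_relTuples ht).2 i₀
        have hm2 : t' (cyc i₀) ∈ Rel n bn (t i₀) := by
          rw [hti₀]; exact (mem_relTuples ht').2 i₀
        have := rank_injOn hm1 hm2 hden
        rw [hcyc] at this
        exact this
  funext i
  exact H i.1 i le_rfl
lemma Rel_card_le (hband : IsBandwidth n bn) {v : ℕ} (hv1 : 1 ≤ v) (hv2 : v ≤ n) :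
    (Rel n bn v).card ≤ bn := by
  rcases hband with ⟨hlt, hodd⟩ | heq
  · have hn : 0 < n := by omega
    set h : ℕ := (bn - 1) / 2 with hh
    have hbn : bn = 2 * h + 1 := by
      obtain ⟨c, hc⟩ := hodd
      omega
    have hhn : 2 * h + 1 < n := by omega
    set T : Finset ℤ := Finset.Icc 0 (h : ℤ) ∪ Finset.Icc ((n : ℤ) - h) ((n : ℤ) - 1) with hT
    have hTcard : T.card ≤ bn := by
      calc T.card ≤ (Finset.Icc 0 (h : ℤ)).card + (Finset.Icc ((n : ℤ) - h) ((n : ℤ) - 1)).card :=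
            Finset.card_union_le _ _
        _ ≤ bn := by
            rw [Int.card_Icc, Int.card_Icc]
            have e1 : ((h : ℤ) + 1 - 0).toNat = h + 1 := by omega
            have e2 : (((n : ℤ) - 1) + 1 - ((n : ℤ) - h)).toNat = h := by omega
            omega
    have hmaps : ∀ j ∈ Rel n bn v, ((j : ℤ) - v) % n ∈ T := by
      intro j hj
      obtain ⟨hj12, hrel⟩ := Finset.mem_filter.mp hj
      obtain ⟨hj1, hj2⟩ := Finset.mem_Icc.mp hj12
      simp only [BRelevant] at hrel
      set d : ℤ := (j : ℤ) - v with hd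
      have hdb : -(n : ℤ) + 1 ≤ d ∧ d ≤ (n : ℤ) - 1 := by push_cast; omega
      have hrel' : |(v : ℤ) - j| ≤ (h : ℤ) ∨ (n : ℤ) - (h : ℤ) ≤ |(v : ℤ) - j| := by
        rcases hrel with hb | hb | hb
        · omega
        · left; exact_mod_cast hb
        · right; exact_mod_cast hb
      have habs : |(v : ℤ) - j| = |d| := by rw [abs_sub_comm]
      rw [habs] at hrel'
      have hmemiff : ∀ x : ℤ, x ∈ T ↔ (0 ≤ x ∧ x ≤ h) ∨ ((n : ℤ) - h ≤ x ∧ x ≤ (n : ℤ) - 1) := by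
        intro x
        simp only [hT, Finset.mem_union, Finset.mem_Icc]
      rw [hmemiff]
      rcases le_or_gt 0 d with hd0 | hd0
      · have : d % n = d := Int.emod_eq_of_lt hd0 (by omega)
        rw [this]
        rcases hrel' with hb | hb
        · rw [abs_of_nonneg hd0] at hb; left; constructor <;> omega
        · rw [abs_of_nonneg hd0] at hb; right; constructor <;> omega
      · have : d % n = d + n := by
          have h1 : (d + n) % n = d % n := by
            have := Int.add_mul_emod_self_left (a := d) (b := (n:ℤ)) (c := 1)
            simpa using this
          have h2 : (d + n) % n = d + n := Int.emod_eq_of_lt (by omega) (by omega)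
          omega
        rw [this]
        rcases hrel' with hb | hb
        · right; rw [abs_of_neg hd0] at hb; constructor <;> omega
        · left; rw [abs_of_neg hd0] at hb; constructor <;> omega
    have hinj : ∀ j ∈ Rel n bn v, ∀ j' ∈ Rel n bn v,
        ((j : ℤ) - v) % n = ((j' : ℤ) - v) % n → j = j' := by
      intro j hj j' hj' hmod
      simp only [Rel, Finset.mem_filter, Finset.mem_Icc] at hj hj'
      have hmeq : ((j : ℤ) - v) ≡ ((j' : ℤ) - v) [ZMOD (n : ℤ)] := hmod
      have hdvd0 : (n : ℤ) ∣ ((j' : ℤ) - v) - ((j : ℤ) - v) := Int.ModEq.dvd hmeq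
      have hdvd : (n : ℤ) ∣ (j' : ℤ) - j := by
        have he : ((j' : ℤ) - v) - ((j : ℤ) - v) = (j' : ℤ) - j := by ring
        rwa [he] at hdvd0
      rcases lt_trichotomy j j' with hlt' | he | hgt
      · exfalso
        have hle := Int.le_of_dvd (show (0:ℤ) < (j' : ℤ) - j by push_cast; omega) hdvd
        push_cast at hle; omega
      · exact he
      · exfalso
        have hdvd' : (n : ℤ) ∣ (j : ℤ) - j' := by
          have he2 : (j : ℤ) - j' = -((j' : ℤ) - j) := by ring
          rw [he2]
          exact dvd_neg.mpr hdvd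
        have hle := Int.le_of_dvd (show (0:ℤ) < (j : ℤ) - j' by push_cast; omega) hdvd'
        push_cast at hle; omega
    exact le_trans (Finset.card_le_card_of_injOn _ hmaps
      (fun a ha b hb h => hinj a (Finset.mem_coe.mp ha) b (Finset.mem_coe.mp hb) h)) hTcard
  · calc (Rel n bn v).card ≤ (Finset.Icc 1 n).card :=
          Finset.card_le_card (Finset.filter_subset _ _)
      _ = n := by simp
      _ = bn := heq.symm
def newCount (t : Fin k → ℕ) : ℕ := (Finset.univ.filter fun i => ¬ isOld t i).card

lemma den_lt {t : Fin k → ℕ} (ht : t ∈ relTuples n bn k) (hband : IsBandwidth n bn)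
    {i : Fin k} (h : ¬ isOld t i) : den n bn t i < bn := by
  rw [den, if_neg h]
  have hmem : t (cyc i) ∈ Rel n bn (t i) := (mem_relTuples ht).2 i
  have hv := (mem_relTuples ht).1 i
  simp only [Finset.mem_Icc] at hv
  calc ((Rel n bn (t i)).filter (· < t (cyc i))).card < (Rel n bn (t i)).card := by
        have := rank_lt_card (S := Rel n bn (t i)) (x := t (cyc i)) hmem
        convert this using 2
    _ ≤ bn := Rel_card_le hband hv.1 hv.2

lemma card_le_of_newCount (hk : 0 < k) (hband : IsBandwidth n bn) (hbn : 1 ≤ bn)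
    (S : Finset (Fin k → ℕ)) (hS : S ⊆ relTuples n bn k) (E : ℕ)
    (hE : ∀ t ∈ S, newCount t ≤ E) :
    S.card ≤ k ^ k * (n * bn ^ E) := by
  have hmapsto : ∀ t ∈ S, sig t ∈ Fintype.piFinset fun _ : Fin k => Finset.range k := by
    intro t _
    simp only [Fintype.mem_piFinset, Finset.mem_range]
    exact fun i => sig_lt t i
  rw [Finset.card_eq_sum_card_fiberwise hmapsto]
  have hfiber : ∀ σ ∈ Fintype.piFinset fun _ : Fin k => Finset.range k,
      (S.filter fun t => sig t = σ).card ≤ n * bn ^ E := by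
    intro σ _
    rcases Finset.eq_empty_or_nonempty (S.filter fun t => sig t = σ) with he | ⟨t₀, ht₀⟩
    · rw [he]; simp
    have ht₀S : t₀ ∈ S := (Finset.mem_filter.mp ht₀).1
    have ht₀σ : sig t₀ = σ := (Finset.mem_filter.mp ht₀).2
    set D : Finset (Fin k → ℕ) :=
      Fintype.piFinset fun i : Fin k => if σ i = i.1 + 1 then Finset.range bn else {0} with hD
    have key : ∀ t ∈ S, sig t = σ → den n bn t ∈ D := by
      intro t htS htσ
      simp only [hD, Fintype.mem_piFinset]
      intro i
      by_cases hold : isOld t i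
      · have : σ i ≠ i.1 + 1 := by
          rw [← htσ]
          intro hcon
          exact ((sig_eq_iff_not_old t i).mp hcon) hold
        rw [if_neg this]
        simp [den, if_pos hold]
      · have : σ i = i.1 + 1 := by rw [← htσ]; exact (sig_eq_iff_not_old t i).mpr hold
        rw [if_pos this, Finset.mem_range]
        exact den_lt (hS htS) hband hold
    have hcard1 : (S.filter fun t => sig t = σ).card ≤ ((Finset.Icc 1 n) ×ˢ D).card := by
      apply Finset.card_le_card_of_injOn (fun t => (t ⟨0, hk⟩, den n bn t))
      · intro t ht
        have htS := (Finset.mem_filter.mp ht).1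
        have htσ := (Finset.mem_filter.mp ht).2
        simp only [Finset.mem_coe, Finset.mem_product]
        exact ⟨(mem_relTuples (hS htS)).1 _, key t htS htσ⟩
      · intro t ht t' ht' hpair
        simp only [Finset.mem_coe, Finset.mem_filter] at ht ht'
        have : sig t = sig t' := by rw [ht.2, ht'.2]
        exact enc_inj hk (hS ht.1) (hS ht'.1) (congrArg Prod.fst hpair) this
          (congrArg Prod.snd hpair)
    have hDcard : D.card = bn ^ (Finset.univ.filter fun i : Fin k => σ i = i.1 + 1).card := by
      rw [hD, Fintype.card_piFinset]
      have : ∀ i : Fin k, (if σ i = i.1 + 1 then Finset.range bn else {0}).card =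
          if σ i = i.1 + 1 then bn else 1 := by
        intro i; split <;> simp
      rw [Finset.prod_congr rfl (fun i _ => this i), Finset.prod_ite, Finset.prod_const,
        Finset.prod_const, one_pow, mul_one]
    have hnewc : (Finset.univ.filter fun i : Fin k => σ i = i.1 + 1).card = newCount t₀ := by
      rw [newCount]
      congr 1
      ext i
      simp only [Finset.mem_filter, Finset.mem_univ, true_and]
      rw [← ht₀σ]
      exact sig_eq_iff_not_old t₀ i
    calc (S.filter fun t => sig t = σ).card ≤ ((Finset.Icc 1 n) ×ˢ D).card := hcard1
      _ = n * D.card := by rw [Finset.card_product, Nat.card_Icc]; simp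
      _ = n * bn ^ newCount t₀ := by rw [hDcard, hnewc]
      _ ≤ n * bn ^ E := Nat.mul_le_mul_left n (Nat.pow_le_pow_right hbn (hE t₀ ht₀S))
  calc ∑ σ ∈ Fintype.piFinset fun _ : Fin k => Finset.range k,
        (S.filter fun t => sig t = σ).card
      ≤ ∑ σ ∈ Fintype.piFinset fun _ : Fin k => Finset.range k, (n * bn ^ E) :=
        Finset.sum_le_sum hfiber
    _ = k ^ k * (n * bn ^ E) := by
        rw [Finset.sum_const, smul_eq_mul, Fintype.card_piFinset]
        simp
lemma edge_mem_toFinset (t : Fin k → ℕ) (i : Fin k) :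
    s(t i, t (cyc i)) ∈ (tupleEdges t).toFinset := by
  simp only [tupleEdges, Multiset.mem_toFinset, Multiset.mem_map]
  exact ⟨i, by simp, rfl⟩

lemma not_loop_of_not_old {t : Fin k → ℕ} {i : Fin k} (h : ¬ isOld t i) :
    t i ≠ t (cyc i) := not_old_no_earlier h (le_refl i)

lemma edge_inj_aux {t : Fin k → ℕ} {i i' : Fin k} (hlt : i < i')
    (hi : ¬ isOld t i) (hi' : ¬ isOld t i')
    (he : s(t i, t (cyc i)) = s(t i', t (cyc i'))) : False := by
  rcases Sym2.eq_iff.mp he with ⟨h1, h2⟩ | ⟨h1, h2⟩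
  · have hcy : (cyc i).1 = i.1 + 1 := cyc_val_of_not_old hi
    have : cyc i ≤ i' := by
      rw [Fin.le_def, hcy]
      exact Fin.lt_def.mp hlt
    exact not_old_no_earlier hi' this h2
  · exact not_old_no_earlier hi' (le_of_lt hlt) h1

lemma newCount_injOn (t : Fin k → ℕ) :
    Set.InjOn (fun i => s(t i, t (cyc i)))
      ↑(Finset.univ.filter fun i : Fin k => ¬ isOld t i) := by
  intro i hi i' hi' he
  simp only [Finset.coe_filter, Set.mem_setOf_eq] at hi hi'
  by_contra hne
  rcases lt_or_gt_of_ne hne with hlt | hgt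
  · exact edge_inj_aux hlt hi.2 hi'.2 he
  · exact edge_inj_aux hgt hi'.2 hi.2 he.symm

lemma newCount_le_edges (t : Fin k → ℕ) :
    newCount t ≤ (tupleEdges t).toFinset.card :=
  Finset.card_le_card_of_injOn _ (fun i _ => edge_mem_toFinset t i) (newCount_injOn t)

lemma sum_kappa (t : Fin k → ℕ) :
    ∑ l ∈ Finset.Icc 1 k, kappa t l = (tupleEdges t).toFinset.card := by
  have hcardk : Multiset.card (tupleEdges t) = k := by simp [tupleEdges]
  have hmaps : ∀ e ∈ (tupleEdges t).toFinset, (tupleEdges t).count e ∈ Finset.Icc 1 k := by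
    intro e he
    simp only [Finset.mem_Icc]
    constructor
    · rw [Nat.one_le_iff_ne_zero]
      simp only [Multiset.mem_toFinset] at he
      exact fun hc => by simp [Multiset.count_eq_zero] at hc; exact hc he
    · exact le_trans (Multiset.count_le_card _ _) (le_of_eq hcardk)
  exact ((Finset.card_eq_sum_card_fiberwise hmaps).trans (by rfl)).symm

lemma sum_kappa_eq_of_sameProfile {t u : Fin k → ℕ} (h : sameProfile t u) :
    ∑ l ∈ Finset.Icc 1 k, kappa t l = ∑ l ∈ Finset.Icc 1 k, kappa u l :=
  Finset.sum_congr rfl h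

lemma hasOddEdge_of_sameProfile {t u : Fin k → ℕ} (h : sameProfile t u)
    (hu : hasOddEdge u) : hasOddEdge t := by
  obtain ⟨e, he, hodd⟩ := hu
  set l := (tupleEdges u).count e with hl
  have hlk : l ∈ Finset.Icc 1 k := by
    simp only [Finset.mem_Icc]
    have hcardk : Multiset.card (tupleEdges u) = k := by simp [tupleEdges]
    constructor
    · rw [Nat.one_le_iff_ne_zero, hl]
      simp only [Multiset.mem_toFinset] at he
      intro hc
      rw [Multiset.count_eq_zero] at hc
      exact hc he
    · exact le_trans (Multiset.count_le_card _ _) (le_of_eq hcardk)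
  have hku : 0 < kappa u l := by
    rw [kappa, Finset.card_pos]
    exact ⟨e, Finset.mem_filter.mpr ⟨he, rfl⟩⟩
  have hkt : 0 < kappa t l := by rw [h l hlk]; exact hku
  rw [kappa, Finset.card_pos] at hkt
  obtain ⟨e', he'⟩ := hkt
  have := Finset.mem_filter.mp he'
  exact ⟨e', this.1, this.2 ▸ hodd⟩
lemma fI_val_le {kk : ℕ} (t : Fin kk → ℕ) (i : Fin kk) : (fI t i).1 ≤ i.1 :=
  Fin.le_def.mp (fI_le t i)

/-- `fI` as a function on raw indices. -/
def fIdx {kk : ℕ} (t : Fin kk → ℕ) (j : ℕ) : ℕ :=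
  if h : j < kk then (fI t ⟨j, h⟩).1 else 0

lemma fIdx_le {kk : ℕ} (t : Fin kk → ℕ) (j : ℕ) : fIdx t j ≤ j := by
  rw [fIdx]
  split
  · exact fI_val_le t _
  · exact Nat.zero_le _

lemma fIdx_eq {kk : ℕ} (t : Fin kk → ℕ) {j : ℕ} (hj : j < kk) :
    fIdx t j = (fI t ⟨j, hj⟩).1 := dif_pos hj

noncomputable def chi (kk : ℕ) (t : Fin kk → ℕ) (estar : Sym2 ℕ) (j : ℕ) : ZMod 2 :=
  if h : j < kk ∧ 0 < j then
    if hf : fIdx t j = j then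
      chi kk t estar (j-1) +
        (if s(t ⟨j-1, by omega⟩, t ⟨j, h.1⟩) = estar then 1 else 0)
    else
      have hlt : fIdx t j < j := Nat.lt_of_le_of_ne (fIdx_le t j) hf
      chi kk t estar (fIdx t j)
  else 0
  termination_by j
  decreasing_by
  all_goals omega

lemma chi_fI {kk : ℕ} (t : Fin kk → ℕ) (estar : Sym2 ℕ) (j : ℕ) (hj : j < kk) :
    chi kk t estar j = chi kk t estar (fI t ⟨j, hj⟩).1 := by
  rw [← fIdx_eq t hj]
  rcases Nat.eq_zero_or_pos j with h0 | hpos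
  · subst h0
    have : fIdx t 0 = 0 := Nat.le_zero.mp (fIdx_le t 0)
    rw [this]
  · by_cases hf : fIdx t j = j
    · rw [hf]
    · rw [chi.eq_def]
      rw [dif_pos ⟨hj, hpos⟩, dif_neg hf]

lemma chi_congr {kk : ℕ} (t : Fin kk → ℕ) (estar : Sym2 ℕ) {i j : Fin kk}
    (h : t i = t j) : chi kk t estar i.1 = chi kk t estar j.1 := by
  have h1 := chi_fI t estar i.1 i.isLt
  have h2 := chi_fI t estar j.1 j.isLt
  have hi : (⟨i.1, i.isLt⟩ : Fin kk) = i := rfl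
  have hj : (⟨j.1, j.isLt⟩ : Fin kk) = j := rfl
  rw [hi] at h1; rw [hj] at h2
  rw [h1, h2, fI_congr t h]

lemma chi_new {t : Fin k → ℕ} (estar : Sym2 ℕ) {i : Fin k} (h : ¬ isOld t i) :
    chi k t estar (i.1 + 1) =
      chi k t estar i.1 + (if s(t i, t (cyc i)) = estar then 1 else 0) := by
  have hcy : (cyc i).1 = i.1 + 1 := cyc_val_of_not_old h
  have hlt : i.1 + 1 < k := hcy ▸ (cyc i).isLt
  have hceq : (⟨i.1 + 1, hlt⟩ : Fin k) = cyc i := Fin.ext hcy.symm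
  have hfI : fI t (cyc i) = cyc i := fI_cyc_of_not_old h
  have hf : fIdx t (i.1 + 1) = i.1 + 1 := by
    rw [fIdx_eq t hlt, hceq, hfI, hcy]
  rw [chi.eq_def]
  rw [dif_pos ⟨hlt, Nat.succ_pos _⟩, dif_pos hf]
  have h1 : (⟨i.1 + 1 - 1, by omega⟩ : Fin k) = i := Fin.ext (by simp)
  rw [h1, hceq]
  simp

lemma cyc_bijective (hk : 0 < k) : Function.Bijective (cyc : Fin k → Fin k) := by
  rw [Fintype.bijective_iff_injective_and_card]
  refine ⟨fun i j hij => ?_, rfl⟩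
  have hvi : (cyc i).1 = (i.1 + 1) % k := rfl
  have hvj : (cyc j).1 = (j.1 + 1) % k := rfl
  have hv : (i.1 + 1) % k = (j.1 + 1) % k := by
    rw [← hvi, ← hvj, hij]
  have hi := i.isLt
  have hj := j.isLt
  have hmod : ∀ m : ℕ, m < k → (m + 1) % k = if m + 1 = k then 0 else m + 1 := by
    intro m hm
    by_cases hc : m + 1 = k
    · rw [if_pos hc, hc, Nat.mod_self]
    · rw [if_neg hc, Nat.mod_eq_of_lt (by omega)]
  rw [hmod i.1 hi, hmod j.1 hj] at hv
  apply Fin.ext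
  by_cases hci : i.1 + 1 = k <;> by_cases hcj : j.1 + 1 = k <;>
    simp [hci, hcj] at hv ⊢ <;> omega

lemma count_edge (t : Fin k → ℕ) (e : Sym2 ℕ) :
    (tupleEdges t).count e = (Finset.univ.filter fun i : Fin k => s(t i, t (cyc i)) = e).card := by
  rw [tupleEdges, Multiset.count_map]
  have hpe : (Finset.univ.filter fun i : Fin k => s(t i, t (cyc i)) = e) =
      Finset.univ.filter fun i : Fin k => e = s(t i, t (cyc i)) := by
    apply Finset.filter_congr
    intro i _
    simp [eq_comm]
  rw [hpe]
  rfl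

lemma all_even (hk : 0 < k) (t : Fin k → ℕ)
    (hsurj : ∀ e ∈ (tupleEdges t).toFinset, ∃ i, ¬ isOld t i ∧ s(t i, t (cyc i)) = e) :
    ∀ e ∈ (tupleEdges t).toFinset, ¬ Odd ((tupleEdges t).count e) := by
  intro e _ hodd
  set χ : Fin k → ZMod 2 := fun i => chi k t e i.1 with hχ
  have haa : ∀ a : ZMod 2, a + a = 0 := by decide
  have step : ∀ i : Fin k, χ i + χ (cyc i) = (if s(t i, t (cyc i)) = e then 1 else 0) := by
    intro i
    obtain ⟨i₀, hi₀new, hi₀e⟩ := hsurj s(t i, t (cyc i)) (edge_mem_toFinset t i)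
    have hkey : χ i₀ + χ (cyc i₀) = (if s(t i₀, t (cyc i₀)) = e then 1 else 0) := by
      have hcy : (cyc i₀).1 = i₀.1 + 1 := cyc_val_of_not_old hi₀new
      have : χ (cyc i₀) = chi k t e (i₀.1 + 1) := by rw [hχ]; simp only; rw [hcy]
      rw [hχ]
      simp only
      rw [hcy, chi_new e hi₀new, ← add_assoc, haa, zero_add]
    have hsame : χ i + χ (cyc i) = χ i₀ + χ (cyc i₀) := by
      rcases Sym2.eq_iff.mp hi₀e.symm with ⟨h1, h2⟩ | ⟨h1, h2⟩
      · rw [hχ]; simp only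
        rw [chi_congr t e h1, chi_congr t e h2]
      · rw [hχ]; simp only
        rw [chi_congr t e h1, chi_congr t e h2, add_comm]
    rw [hsame, hkey, hi₀e]
  have hsum0 : ∑ i : Fin k, (χ i + χ (cyc i)) = 0 := by
    rw [Finset.sum_add_distrib]
    have hre : ∑ i : Fin k, χ (cyc i) = ∑ i : Fin k, χ i :=
      Fintype.sum_bijective cyc (cyc_bijective hk) _ _ (fun i => rfl)
    rw [hre, haa]
  have hsum1 : ∑ i : Fin k, (χ i + χ (cyc i)) = ((tupleEdges t).count e : ZMod 2) := by
    rw [Finset.sum_congr rfl (fun i _ => step i), Finset.sum_boole, count_edge]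
  rw [hsum1] at hsum0
  obtain ⟨c, hc⟩ := hodd
  rw [hc] at hsum0
  push_cast at hsum0
  have h2 : (2 : ZMod 2) = 0 := rfl
  rw [h2] at hsum0
  simp at hsum0

lemma newCount_succ_le (hk : 0 < k) (t : Fin k → ℕ) (hodd : hasOddEdge t) :
    newCount t + 1 ≤ (tupleEdges t).toFinset.card := by
  set N := (Finset.univ.filter fun i : Fin k => ¬ isOld t i).image
    (fun i => s(t i, t (cyc i))) with hN
  have hNsub : N ⊆ (tupleEdges t).toFinset := by
    intro e he
    simp only [hN, Finset.mem_image] at he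
    obtain ⟨i, _, rfl⟩ := he
    exact edge_mem_toFinset t i
  have hNcard : N.card = newCount t := by
    rw [hN, Finset.card_image_of_injOn (newCount_injOn t)]
    rfl
  by_cases hss : N = (tupleEdges t).toFinset
  · exfalso
    have hsurj : ∀ e ∈ (tupleEdges t).toFinset, ∃ i, ¬ isOld t i ∧ s(t i, t (cyc i)) = e := by
      intro e he
      rw [← hss, hN] at he
      simp only [Finset.mem_image, Finset.mem_filter] at he
      obtain ⟨i, ⟨_, hi⟩, hie⟩ := he
      exact ⟨i, hi, hie⟩
    obtain ⟨e, he, hoe⟩ := hodd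
    exact all_even hk t hsurj e he hoe
  · have : N ⊂ (tupleEdges t).toFinset := ssubset_of_subset_of_ne hNsub hss
    have := Finset.card_lt_card this
    omega
/-- Bounds on the number and the size of profile equivalence classes
of `b_n`-relevant tuples. -/
theorem stmt16 (b : ℕ → ℕ) (hband : ∀ m, 1 ≤ m → IsBandwidth m (b m))
    (n k : ℕ) (hk : 0 < k) (hn : 0 < n) :
    ((relTuples n (b n) k).image (fun t => fun j : Fin k => kappa t (j.1 + 1))).card ≤
        (k + 1) ^ k ∧
    ∀ u ∈ relTuples n (b n) k,
      (Tclass n (b n) k u).card ≤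
          k ^ k * (n * b n ^ (∑ l ∈ Finset.Icc 1 k, kappa u l)) ∧
      (hasOddEdge u →
        (Tclass n (b n) k u).card ≤
          k ^ k * (n * b n ^ ((∑ l ∈ Finset.Icc 1 k, kappa u l) - 1))) := by
  have hband' : IsBandwidth n (b n) := hband n hn
  have hbn1 : 1 ≤ b n := by
    rcases hband' with ⟨_, hodd⟩ | heq
    · rcases hodd with ⟨c, hc⟩; omega
    · omega
  refine ⟨part_i, ?_⟩
  intro u hu
  constructor
  · apply card_le_of_newCount hk hband' hbn1 _ (Finset.filter_subset _ _)
    intro t ht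
    have htp : sameProfile t u := (Finset.mem_filter.mp ht).2
    calc newCount t ≤ (tupleEdges t).toFinset.card := newCount_le_edges t
      _ = ∑ l ∈ Finset.Icc 1 k, kappa t l := (sum_kappa t).symm
      _ = ∑ l ∈ Finset.Icc 1 k, kappa u l := sum_kappa_eq_of_sameProfile htp
  · intro hodd
    apply card_le_of_newCount hk hband' hbn1 _ (Finset.filter_subset _ _)
    intro t ht
    have htp : sameProfile t u := (Finset.mem_filter.mp ht).2
    have hto : hasOddEdge t := hasOddEdge_of_sameProfile htp hodd
    have h1 := newCount_succ_le hk t hto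
    have h2 : (tupleEdges t).toFinset.card = ∑ l ∈ Finset.Icc 1 k, kappa u l := by
      rw [← sum_kappa_eq_of_sameProfile htp, sum_kappa t]
    omega

end RMT
end
end
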